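/- Let d ≥ 1 and ε > 0. The regularization ρ_ε : ℝ^d → ℝ is twice continuously differentiable on all of ℝ^d (i.e., ρ_ε is of class C²). -/

import Mathlib

noncomputable def rhoEps (d : ℕ) (ε : ℝ) (z : EuclideanSpace ℝ (Fin d)) : ℝ :=
  if ε ≤ ‖z‖ then ‖z‖ - (1 - 2 / Real.pi) * ε
  else (2 * ε / Real.pi) * (1 - Real.cos (Real.pi * ‖z‖ / (2 * ε)))

open Real Filter FormalMultilinearSeries Set Nat

/-- Coefficients of the power series of `t ↦ cos √t`. -/
noncomputable def cosCoef : ℕ → ℝ := fun n => (-1) ^ n / ((2 * n)! : ℝ)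

lemma cosCoef_norm (n : ℕ) : ‖cosCoef n‖ = (((2 * n)! : ℝ))⁻¹ := by
  have h : ((2 * n)! : ℝ) > 0 := by positivity
  simp [cosCoef, abs_div, abs_pow, abs_of_pos h, one_div]

lemma cosCoef_ne_zero (n : ℕ) : cosCoef n ≠ 0 := by
  have h : ((2 * n)! : ℝ) > 0 := by positivity
  simp [cosCoef, sub_eq_zero, h.ne']

lemma cosCoef_ratio (n : ℕ) :
    ‖cosCoef (n + 1)‖ / ‖cosCoef n‖ = 1 / ((2 * (n : ℝ) + 1) * (2 * (n : ℝ) + 2)) := by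
  have h1 : (2 * (n + 1))! = (2 * n + 2) * ((2 * n + 1) * (2 * n)!) := by
    have h2 : 2 * (n + 1) = (2 * n + 1) + 1 := by ring
    rw [h2, Nat.factorial_succ, Nat.factorial_succ]
  rw [cosCoef_norm, cosCoef_norm, h1]
  have h3 : ((2 * n)! : ℝ) > 0 := by positivity
  push_cast
  rw [div_eq_div_iff (by positivity) (by positivity)]
  field_simp

lemma cosCoef_radius : (ofScalars ℝ cosCoef).radius = ⊤ := by
  apply ofScalars_radius_eq_top_of_tendsto
  · exact Eventually.of_forall cosCoef_ne_zero
  · apply squeeze_zero (fun n => by positivity) (g := fun n : ℕ => 1 / ((n : ℝ) + 1))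
    · intro n
      rw [Nat.succ_eq_add_one, cosCoef_ratio]
      apply div_le_div_of_nonneg_left one_pos.le (by positivity)
      nlinarith [Nat.cast_nonneg (α := ℝ) n]
    · exact tendsto_one_div_add_atTop_nhds_zero_nat

/-- The entire function `G` with `G (x ^ 2) = cos x`. -/
noncomputable def cosSqrt : ℝ → ℝ := (ofScalars ℝ cosCoef).sum

lemma cosSqrt_contDiffAt (t : ℝ) {n : WithTop ℕ∞} : ContDiffAt ℝ n cosSqrt t := by
  have h := (ofScalars ℝ cosCoef).hasFPowerSeriesOnBall
    (by rw [cosCoef_radius]; exact ENNReal.zero_lt_top)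
  exact (h.analyticAt_of_mem (by rw [cosCoef_radius]; simp [edist_lt_top])).contDiffAt

lemma cosSqrt_sq (x : ℝ) : cosSqrt (x ^ 2) = Real.cos x := by
  have h : cosSqrt (x ^ 2) = ∑' n : ℕ, cosCoef n • (x ^ 2) ^ n :=
    tsum_congr fun n => ofScalars_apply_eq cosCoef (x ^ 2) n
  rw [h, Real.cos_eq_tsum]
  refine tsum_congr fun n => ?_
  simp only [cosCoef, smul_eq_mul, ← pow_mul]
  ring

/-- The one-dimensional profile. -/
noncomputable def gAux (ε : ℝ) : ℝ → ℝ := fun r =>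
  if ε ≤ r then r - (1 - 2 / Real.pi) * ε
  else (2 * ε / Real.pi) * (1 - Real.cos (Real.pi * r / (2 * ε)))

noncomputable def gAux1 (ε : ℝ) : ℝ → ℝ := fun r =>
  if ε ≤ r then 1 else Real.sin (Real.pi * r / (2 * ε))

noncomputable def gAux2 (ε : ℝ) : ℝ → ℝ := fun r =>
  if ε ≤ r then 0 else (Real.pi / (2 * ε)) * Real.cos (Real.pi * r / (2 * ε))

lemma hasDerivAt_arg (ε : ℝ) (r : ℝ) :
    HasDerivAt (fun r : ℝ => Real.pi * r / (2 * ε)) (Real.pi / (2 * ε)) r := by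
  simpa [mul_div_assoc] using ((hasDerivAt_id r).const_mul Real.pi).div_const (2 * ε)

lemma hasDerivAt_inner (ε : ℝ) (hε : 0 < ε) (r : ℝ) :
    HasDerivAt (fun r : ℝ => (2 * ε / Real.pi) * (1 - Real.cos (Real.pi * r / (2 * ε))))
      (Real.sin (Real.pi * r / (2 * ε))) r := by
  have h := ((hasDerivAt_arg ε r).cos.const_sub 1).const_mul (2 * ε / Real.pi)
  convert h using 1
  · rfl
  · rfl
  have hπ := Real.pi_ne_zero
  have hε' := hε.ne'
  field_simp

lemma arg_at_eps (ε : ℝ) (hε : 0 < ε) : Real.pi * ε / (2 * ε) = Real.pi / 2 := by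
  have hε' := hε.ne'
  field_simp

lemma gAux_eq_inner_on_Iic (ε : ℝ) (hε : 0 < ε) :
    ∀ x ∈ Iic ε, gAux ε x
      = (2 * ε / Real.pi) * (1 - Real.cos (Real.pi * x / (2 * ε))) := by
  intro x hx
  rcases lt_or_eq_of_le (mem_Iic.mp hx) with h | h
  · simp [gAux, not_le.mpr h]
  · subst h
    simp only [gAux, if_pos le_rfl, arg_at_eps x hε, Real.cos_pi_div_two]
    have hπ := Real.pi_ne_zero
    field_simp
    ring

lemma hasDerivAt_gAux (ε : ℝ) (hε : 0 < ε) (r : ℝ) :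
    HasDerivAt (gAux ε) (gAux1 ε r) r := by
  rcases lt_trichotomy r ε with h | h | h
  · have he : gAux ε =ᶠ[nhds r]
        fun x => (2 * ε / Real.pi) * (1 - Real.cos (Real.pi * x / (2 * ε))) := by
      filter_upwards [Iio_mem_nhds h] with x hx
      simp [gAux, not_le.mpr (mem_Iio.mp hx)]
    have h2 := (hasDerivAt_inner ε hε r).congr_of_eventuallyEq he
    simpa [gAux1, not_le.mpr h] using h2
  · rw [h]
    have hIic : HasDerivWithinAt (gAux ε) 1 (Iic ε) ε := by
      have h1 := (hasDerivAt_inner ε hε ε).hasDerivWithinAt (s := Iic ε)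
      have h2 := h1.congr (gAux_eq_inner_on_Iic ε hε)
        (gAux_eq_inner_on_Iic ε hε ε (mem_Iic.mpr le_rfl))
      simpa [arg_at_eps ε hε, Real.sin_pi_div_two] using h2
    have hIci : HasDerivWithinAt (gAux ε) 1 (Ici ε) ε := by
      have h1 := ((hasDerivAt_id ε).sub_const ((1 - 2 / Real.pi) * ε)).hasDerivWithinAt
        (s := Ici ε)
      exact h1.congr (fun x hx => by simp [gAux, if_pos (mem_Ici.mp hx)])
        (by simp [gAux, if_pos le_rfl])
    have h3 := hIic.union hIci
    rw [Iic_union_Ici, hasDerivWithinAt_univ] at h3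
    simpa [gAux1, if_pos le_rfl] using h3
  · have he : gAux ε =ᶠ[nhds r] fun x => x - (1 - 2 / Real.pi) * ε := by
      filter_upwards [Ioi_mem_nhds h] with x hx
      simp [gAux, if_pos (le_of_lt (mem_Ioi.mp hx))]
    have h2 := (((hasDerivAt_id r).sub_const ((1 - 2 / Real.pi) * ε))).congr_of_eventuallyEq he
    simpa [gAux1, if_pos h.le] using h2

lemma hasDerivAt_inner1 (ε : ℝ) (r : ℝ) :
    HasDerivAt (fun r : ℝ => Real.sin (Real.pi * r / (2 * ε)))
      ((Real.pi / (2 * ε)) * Real.cos (Real.pi * r / (2 * ε))) r := by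
  have h := (hasDerivAt_arg ε r).sin
  convert h using 1
  ring

lemma hasDerivAt_gAux1 (ε : ℝ) (hε : 0 < ε) (r : ℝ) :
    HasDerivAt (gAux1 ε) (gAux2 ε r) r := by
  rcases lt_trichotomy r ε with h | h | h
  · have he : gAux1 ε =ᶠ[nhds r] fun x => Real.sin (Real.pi * x / (2 * ε)) := by
      filter_upwards [Iio_mem_nhds h] with x hx
      simp [gAux1, not_le.mpr (mem_Iio.mp hx)]
    have h2 := (hasDerivAt_inner1 ε r).congr_of_eventuallyEq he
    simpa [gAux2, not_le.mpr h] using h2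
  · rw [h]
    have hkey : ∀ x ∈ Iic ε, gAux1 ε x = Real.sin (Real.pi * x / (2 * ε)) := by
      intro x hx
      rcases lt_or_eq_of_le (mem_Iic.mp hx) with h | h
      · simp [gAux1, not_le.mpr h]
      · subst h
        simp [gAux1, if_pos le_rfl, arg_at_eps x hε, Real.sin_pi_div_two]
    have hIic : HasDerivWithinAt (gAux1 ε) 0 (Iic ε) ε := by
      have h1 := (hasDerivAt_inner1 ε ε).hasDerivWithinAt (s := Iic ε)
      have h2 := h1.congr hkey (hkey ε (mem_Iic.mpr le_rfl))
      simpa [arg_at_eps ε hε, Real.cos_pi_div_two] using h2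
    have hIci : HasDerivWithinAt (gAux1 ε) 0 (Ici ε) ε := by
      have h1 := (hasDerivAt_const ε (1 : ℝ)).hasDerivWithinAt (s := Ici ε)
      exact h1.congr (fun x hx => by simp [gAux1, if_pos (mem_Ici.mp hx)])
        (by simp [gAux1, if_pos le_rfl])
    have h3 := hIic.union hIci
    rw [Iic_union_Ici, hasDerivWithinAt_univ] at h3
    simpa [gAux2, if_pos le_rfl] using h3
  · have he : gAux1 ε =ᶠ[nhds r] fun _ => (1 : ℝ) := by
      filter_upwards [Ioi_mem_nhds h] with x hx
      simp [gAux1, if_pos (le_of_lt (mem_Ioi.mp hx))]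
    have h2 := (hasDerivAt_const r (1 : ℝ)).congr_of_eventuallyEq he
    simpa [gAux2, if_pos h.le] using h2

lemma continuous_gAux2 (ε : ℝ) (hε : 0 < ε) : Continuous (gAux2 ε) := by
  unfold gAux2
  apply Continuous.if_le continuous_const
    (continuous_const.mul (Real.continuous_cos.comp (by continuity)))
    continuous_const continuous_id
  intro x hx
  simp only [id_eq, Function.comp_apply, Pi.mul_apply] at hx ⊢
  rw [← hx, arg_at_eps ε hε, Real.cos_pi_div_two, mul_zero]

lemma contDiff_gAux (ε : ℝ) (hε : 0 < ε) : ContDiff ℝ 2 (gAux ε) := by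
  have hd1 : deriv (gAux ε) = gAux1 ε := funext fun r => (hasDerivAt_gAux ε hε r).deriv
  have hd2 : deriv (gAux1 ε) = gAux2 ε := funext fun r => (hasDerivAt_gAux1 ε hε r).deriv
  have h2 : (2 : WithTop ℕ∞) = 1 + 1 := by norm_num
  rw [h2, contDiff_succ_iff_deriv]
  refine ⟨fun r => (hasDerivAt_gAux ε hε r).differentiableAt, by simp, ?_⟩
  rw [hd1, contDiff_one_iff_deriv, hd2]
  exact ⟨fun r => (hasDerivAt_gAux1 ε hε r).differentiableAt, continuous_gAux2 ε hε⟩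

/-- `ρ_ε` is of class `C²` on all of `ℝ^d`. -/
theorem rhoEps_contDiff_two (d : ℕ) (hd : 1 ≤ d) (ε : ℝ) (hε : 0 < ε) :
    ContDiff ℝ 2 (rhoEps d ε) := by
  rw [contDiff_iff_contDiffAt]
  intro z
  by_cases hz : z = 0
  · subst hz
    have hG : ContDiffAt ℝ 2
        (fun z : EuclideanSpace ℝ (Fin d) =>
          (2 * ε / Real.pi) * (1 - cosSqrt ((Real.pi / (2 * ε)) ^ 2 * ‖z‖ ^ 2))) 0 := by
      refine contDiffAt_const.mul (contDiffAt_const.sub ?_)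
      exact (cosSqrt_contDiffAt _).comp 0
        ((contDiff_const.mul (contDiff_norm_sq ℝ)).contDiffAt)
    refine hG.congr_of_eventuallyEq ?_
    filter_upwards [Metric.ball_mem_nhds (0 : EuclideanSpace ℝ (Fin d)) hε] with x hx
    rw [mem_ball_zero_iff] at hx
    have harg : (Real.pi / (2 * ε)) ^ 2 * ‖x‖ ^ 2 = (Real.pi * ‖x‖ / (2 * ε)) ^ 2 := by
      ring
    rw [rhoEps, if_neg (not_le.mpr hx), harg, cosSqrt_sq]
  · exact ((contDiff_gAux ε hε).contDiffAt (x := ‖z‖)).comp z (contDiffAt_norm ℝ (n := 2) hz)
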